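/- Let n, k : ℕ and let m : ℕ satisfy 1 ≤ m and 2m ≤ nk. Then the operator Δ is injective on Q_n(k,m−1): it maps Q_n(k,m−1) into Q_n(k,m), and for every I ∈ Q_n(k,m−1), Δ(I) = 0 implies I = 0. -/

import Mathlib

open MvPolynomial

/-- The operator `D(I) = Σ_{i=1}^{n} i · a_{i-1} · ∂I/∂a_i`. -/
noncomputable def Dop (n : ℕ) :
    MvPolynomial (Fin (n+1)) ℚ →ₗ[ℚ] MvPolynomial (Fin (n+1)) ℚ :=
  ∑ i : Fin n, ((i : ℚ) + 1) •
    ((LinearMap.mulLeft ℚ (X i.castSucc)).comp (pderiv i.succ).toLinearMap)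

/-- The operator `Δ(I) = Σ_{i=0}^{n-1} (n-i) · a_{i+1} · ∂I/∂a_i`. -/
noncomputable def Δop (n : ℕ) :
    MvPolynomial (Fin (n+1)) ℚ →ₗ[ℚ] MvPolynomial (Fin (n+1)) ℚ :=
  ∑ i : Fin n, ((n : ℚ) - (i : ℚ)) •
    ((LinearMap.mulLeft ℚ (X i.succ)).comp (pderiv i.castSucc).toLinearMap)

/-- `Q_n(k,m)`: span of monomials of degree `k` and weight `m`. -/
noncomputable def Qspace (n k m : ℕ) : Submodule ℚ (MvPolynomial (Fin (n+1)) ℚ) :=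
  Submodule.span ℚ { p | ∃ ν : Fin (n+1) →₀ ℕ,
    (∑ i : Fin (n+1), ν i) = k ∧ (∑ i : Fin (n+1), (i : ℕ) * ν i) = m ∧ p = monomial ν (1 : ℚ) }

/-- `S_n(k,m)`: semi-invariants of degree `k` and weight `m`. -/
noncomputable def Sspace (n k m : ℕ) : Submodule ℚ (MvPolynomial (Fin (n+1)) ℚ) :=
  Qspace n k m ⊓ LinearMap.ker (Dop n)

/-- `p(k,n,m)`: number of partitions of `m` in a `k × n` rectangle. -/
def pRect (k n m : ℕ) : ℕ :=
  (Finset.univ.filter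
    (fun P : Nat.Partition m => Multiset.card P.parts ≤ k ∧ ∀ x ∈ P.parts, x ≤ n)).card

/-- Coefficient embedding `ℚ[a] → ℚ[z][a]`. -/
noncomputable def ιmap (n : ℕ) :
    MvPolynomial (Fin (n+1)) ℚ →+* MvPolynomial (Fin (n+1)) (Polynomial ℚ) :=
  MvPolynomial.map (Polynomial.C)

/-- The shear substitution `a_i ↦ a_i' = Σ_{j=0}^{i} C(i,j) a_{i-j} z^j`. -/
noncomputable def φmap (n : ℕ) :
    MvPolynomial (Fin (n+1)) ℚ →ₐ[ℚ] MvPolynomial (Fin (n+1)) (Polynomial ℚ) :=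
  aeval (fun i : Fin (n+1) => ∑ j ∈ Finset.range ((i : ℕ) + 1),
    (C ((Nat.choose (i : ℕ) j : Polynomial ℚ) * Polynomial.X ^ j)) *
      X (⟨(i : ℕ) - j, Nat.lt_of_le_of_lt (Nat.sub_le _ _) i.isLt⟩ : Fin (n+1)))

/-- The vertical shear substitution `a_i ↦ a_i'' = Σ_{j=0}^{n-i} C(n-i,j) a_{i+j} z^j`. -/
noncomputable def ψmap (n : ℕ) :
    MvPolynomial (Fin (n+1)) ℚ →ₐ[ℚ] MvPolynomial (Fin (n+1)) (Polynomial ℚ) :=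
  aeval (fun i : Fin (n+1) => ∑ j ∈ (Finset.range (n - (i : ℕ) + 1)).attach,
    (C ((Nat.choose (n - (i : ℕ)) j.1 : Polynomial ℚ) * Polynomial.X ^ j.1)) *
      X (⟨(i : ℕ) + j.1, by
        have h1 := Finset.mem_range.mp j.2
        have h2 := i.isLt
        omega⟩ : Fin (n+1)))

/-- The weighted total degree of `I`: max of `Σ_i i·ν_i` over monomials of `I`. -/
def wdeg (n : ℕ) (I : MvPolynomial (Fin (n+1)) ℚ) : ℕ :=
  I.support.sup (fun ν => ∑ i : Fin (n+1), (i : ℕ) * ν i)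

abbrev RR (n : ℕ) := MvPolynomial (Fin (n+1)) ℚ

lemma der_sum_apply {n : ℕ} {ι : Type*} (s : Finset ι)
    (d : ι → Derivation ℚ (RR n) (RR n)) (x : RR n) :
    (∑ i ∈ s, d i) x = ∑ i ∈ s, d i x := by
  induction s using Finset.cons_induction with
  | empty => simp
  | cons a s ha ih => rw [Finset.sum_cons, Finset.sum_cons, Derivation.add_apply, ih]

noncomputable def Δder (n : ℕ) : Derivation ℚ (RR n) (RR n) :=
  ∑ i : Fin n, (C ((n : ℚ) - (i : ℚ)) * X i.succ) • pderiv i.castSucc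

noncomputable def Dder (n : ℕ) : Derivation ℚ (RR n) (RR n) :=
  ∑ i : Fin n, (C ((i : ℚ) + 1) * X i.castSucc) • pderiv i.succ

noncomputable def Eder (n : ℕ) : Derivation ℚ (RR n) (RR n) :=
  ∑ i : Fin (n+1), (C (2 * (i : ℚ) - (n : ℚ)) * X i) • pderiv i

lemma Δop_apply {n : ℕ} (p : RR n) : Δop n p = Δder n p := by
  rw [Δder, der_sum_apply, Δop]
  simp only [LinearMap.sum_apply, LinearMap.smul_apply, LinearMap.comp_apply,
    LinearMap.mulLeft_apply, Derivation.coe_smul, Pi.smul_apply, smul_eq_mul,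
    Derivation.coeFn_coe]
  refine Finset.sum_congr rfl fun i _ => ?_
  rw [smul_eq_C_mul, mul_assoc]

lemma Dop_apply {n : ℕ} (p : RR n) : Dop n p = Dder n p := by
  rw [Dder, der_sum_apply, Dop]
  simp only [LinearMap.sum_apply, LinearMap.smul_apply, LinearMap.comp_apply,
    LinearMap.mulLeft_apply, Derivation.coe_smul, Pi.smul_apply, smul_eq_mul,
    Derivation.coeFn_coe]
  refine Finset.sum_congr rfl fun i _ => ?_
  rw [smul_eq_C_mul, mul_assoc]


noncomputable def ΔF (n : ℕ) : Fin (n+1) → RR n := fun t =>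
  if h : (t : ℕ) < n then ((n : ℚ) - ((t : ℕ) : ℚ)) • X (⟨(t : ℕ) + 1, by omega⟩ : Fin (n+1)) else 0

noncomputable def DF (n : ℕ) : Fin (n+1) → RR n := fun t =>
  if h : 1 ≤ (t : ℕ) then (((t : ℕ) : ℚ)) • X (⟨(t : ℕ) - 1, by omega⟩ : Fin (n+1)) else 0

lemma ΔF_castSucc {n : ℕ} (i : Fin n) :
    ΔF n i.castSucc = ((n : ℚ) - (i : ℚ)) • X i.succ := by
  have h : ((i.castSucc : ℕ)) < n := i.isLt
  rw [ΔF, dif_pos h]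
  congr 1

lemma ΔF_last {n : ℕ} : ΔF n (Fin.last n) = 0 := by simp [ΔF]

lemma DF_succ {n : ℕ} (i : Fin n) :
    DF n i.succ = ((i : ℚ) + 1) • X i.castSucc := by
  have h : 1 ≤ ((i.succ : ℕ)) := by simp [Fin.val_succ]
  rw [DF, dif_pos h]
  have e1 : (((i.succ : ℕ) : ℚ)) = (i : ℚ) + 1 := by simp [Fin.val_succ]
  rw [e1]
  congr 1

lemma DF_zero {n : ℕ} : DF n 0 = 0 := by simp [DF]

lemma sum_cs {n : ℕ} {M : Type*} [AddCommMonoid M] (F : Fin (n+1) → M)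
    (hF : F (Fin.last n) = 0) (j : Fin (n+1)) :
    (∑ i : Fin n, if i.castSucc = j then F i.castSucc else 0) = F j := by
  induction j using Fin.lastCases with
  | last =>
    rw [hF]
    exact Finset.sum_eq_zero fun i _ => if_neg (Fin.castSucc_lt_last i).ne
  | cast l =>
    simp only [Fin.castSucc_inj]
    rw [Finset.sum_ite_eq' Finset.univ l (fun i => F i.castSucc)]
    simp

lemma sum_sc {n : ℕ} {M : Type*} [AddCommMonoid M] (F : Fin (n+1) → M)
    (hF : F 0 = 0) (j : Fin (n+1)) :
    (∑ i : Fin n, if i.succ = j then F i.succ else 0) = F j := by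
  induction j using Fin.cases with
  | zero =>
    rw [hF]
    exact Finset.sum_eq_zero fun i _ => if_neg (Fin.succ_ne_zero i)
  | succ l =>
    simp only [Fin.succ_inj]
    rw [Finset.sum_ite_eq' Finset.univ l (fun i => F i.succ)]
    simp

lemma Δder_X {n : ℕ} (j : Fin (n+1)) : Δder n (X j) = ΔF n j := by
  rw [Δder, der_sum_apply, ← sum_cs (ΔF n) ΔF_last j]
  refine Finset.sum_congr rfl fun i _ => ?_
  rw [ΔF_castSucc]
  by_cases h : i.castSucc = j
  · simp [h, pderiv_X, Pi.single_apply, smul_eq_C_mul]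
  · simp [h, pderiv_X, Pi.single_apply, Ne.symm h]

lemma Dder_X {n : ℕ} (j : Fin (n+1)) : Dder n (X j) = DF n j := by
  rw [Dder, der_sum_apply, ← sum_sc (DF n) DF_zero j]
  refine Finset.sum_congr rfl fun i _ => ?_
  rw [DF_succ]
  by_cases h : i.succ = j
  · simp [h, pderiv_X, Pi.single_apply, smul_eq_C_mul]
  · simp [h, pderiv_X, Pi.single_apply, Ne.symm h]

lemma Eder_X {n : ℕ} (j : Fin (n+1)) :
    Eder n (X j) = (2 * (j : ℚ) - (n : ℚ)) • X j := by
  rw [Eder, der_sum_apply]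
  rw [Finset.sum_eq_single j]
  · simp [pderiv_X, Pi.single_apply, smul_eq_C_mul]
  · intro i _ hij
    simp [pderiv_X, Pi.single_apply, Ne.symm hij]
  · simp

lemma comm_der (n : ℕ) : ⁅Δder n, Dder n⁆ = Eder n := by
  apply derivation_ext
  intro j
  have hj := j.isLt
  rw [Derivation.commutator_apply, Δder_X, Dder_X, Eder_X]
  by_cases h1 : 1 ≤ (j : ℕ) <;> by_cases h2 : (j : ℕ) < n
  · -- 1 ≤ j < n
    rw [show DF n j = (((j:ℕ) : ℚ)) • X ⟨(j:ℕ) - 1, by omega⟩ from dif_pos h1]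
    rw [show ΔF n j = ((n:ℚ) - ((j:ℕ):ℚ)) • X ⟨(j:ℕ) + 1, by omega⟩ from dif_pos h2]
    rw [Derivation.map_smul, Derivation.map_smul, Δder_X, Dder_X]
    rw [show ΔF n ⟨(j:ℕ) - 1, by omega⟩
        = ((n:ℚ) - (((j:ℕ) - 1 : ℕ):ℚ)) • X ⟨((j:ℕ) - 1) + 1, by omega⟩ from dif_pos (by simp; omega)]
    rw [show DF n ⟨(j:ℕ) + 1, by omega⟩
        = ((((j:ℕ) + 1 : ℕ)):ℚ) • X ⟨((j:ℕ) + 1) - 1, by omega⟩ from dif_pos (by simp)]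
    rw [show (⟨((j:ℕ) - 1) + 1, by omega⟩ : Fin (n+1)) = j from Fin.ext (by simp; omega)]
    rw [show (⟨((j:ℕ) + 1) - 1, by omega⟩ : Fin (n+1)) = j from Fin.ext (by simp)]
    rw [Nat.cast_sub h1, smul_smul, smul_smul, ← sub_smul]
    congr 1
    push_cast
    ring
  · -- j = last
    rw [show ΔF n j = 0 from dif_neg h2]
    rw [show DF n j = (((j:ℕ) : ℚ)) • X ⟨(j:ℕ) - 1, by omega⟩ from dif_pos h1]
    rw [Derivation.map_smul, Δder_X, map_zero]
    rw [show ΔF n ⟨(j:ℕ) - 1, by omega⟩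
        = ((n:ℚ) - (((j:ℕ) - 1 : ℕ):ℚ)) • X ⟨((j:ℕ) - 1) + 1, by omega⟩ from dif_pos (by simp; omega)]
    rw [show (⟨((j:ℕ) - 1) + 1, by omega⟩ : Fin (n+1)) = j from Fin.ext (by simp; omega)]
    have hjn : (j : ℕ) = n := by omega
    rw [Nat.cast_sub h1, hjn, smul_smul, sub_zero]
    congr 1
    push_cast
    ring
  · -- j = 0
    rw [show DF n j = 0 from dif_neg h1]
    rw [show ΔF n j = ((n:ℚ) - ((j:ℕ):ℚ)) • X ⟨(j:ℕ) + 1, by omega⟩ from dif_pos h2]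
    rw [Derivation.map_smul, Dder_X, map_zero]
    rw [show DF n ⟨(j:ℕ) + 1, by omega⟩
        = ((((j:ℕ) + 1 : ℕ)):ℚ) • X ⟨((j:ℕ) + 1) - 1, by omega⟩ from dif_pos (by simp)]
    rw [show (⟨((j:ℕ) + 1) - 1, by omega⟩ : Fin (n+1)) = j from Fin.ext (by simp)]
    have hj0 : (j : ℕ) = 0 := by omega
    rw [hj0, smul_smul, zero_sub, ← neg_smul]
    congr 1
    push_cast
    ring
  · -- n = 0, j = 0
    rw [show DF n j = 0 from dif_neg h1, show ΔF n j = 0 from dif_neg h2]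
    have hj0 : (j : ℕ) = 0 := by omega
    have hn0 : n = 0 := by omega
    have hc : (2 * (((j:ℕ)):ℚ) - (n:ℚ)) = 0 := by rw [hj0, hn0]; norm_num
    rw [map_zero, map_zero, hc, zero_smul, sub_zero]

lemma comm_apply {n : ℕ} (p : RR n) :
    Δop n (Dop n p) - Dop n (Δop n p) = Eder n p := by
  rw [Δop_apply, Δop_apply, Dop_apply, Dop_apply, ← Derivation.commutator_apply, comm_der]


lemma X_mul_pderiv_monomial {n : ℕ} (i : Fin (n+1)) (ν : Fin (n+1) →₀ ℕ) :
    X i * pderiv i (monomial ν (1:ℚ)) = ((ν i : ℚ)) • monomial ν 1 := by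
  rw [pderiv_monomial]
  by_cases h : ν i = 0
  · simp [h]
  · rw [← pow_one (X i), ← monomial_single_add]
    rw [add_tsub_cancel_of_le (Finsupp.single_le_iff.mpr (Nat.one_le_iff_ne_zero.mpr h))]
    rw [smul_monomial]
    norm_num

lemma Eder_monomial {n : ℕ} (k w : ℕ) (ν : Fin (n+1) →₀ ℕ)
    (hd : (∑ i : Fin (n+1), ν i) = k) (hw : (∑ i : Fin (n+1), (i : ℕ) * ν i) = w) :
    Eder n (monomial ν (1:ℚ)) = (2*(w:ℚ) - (n:ℚ)*(k:ℚ)) • monomial ν 1 := by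
  rw [Eder, der_sum_apply]
  have step : ∀ i : Fin (n+1),
      ((C (2 * (i : ℚ) - (n : ℚ)) * X i) • pderiv i) (monomial ν (1:ℚ))
      = ((2 * (i : ℚ) - (n : ℚ)) * (ν i : ℚ)) • monomial ν 1 := by
    intro i
    simp only [Derivation.coe_smul, Pi.smul_apply, smul_eq_mul]
    rw [mul_assoc, X_mul_pderiv_monomial, smul_eq_C_mul, smul_eq_C_mul, ← mul_assoc, ← C_mul]
  rw [Finset.sum_congr rfl (fun i _ => step i), ← Finset.sum_smul]
  congr 1
  have h1 : ((w:ℚ)) = ∑ i : Fin (n+1), (i : ℚ) * ((ν i : ℚ)) := by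
    rw [← hw]; push_cast; ring
  have h2 : ((k:ℚ)) = ∑ i : Fin (n+1), ((ν i : ℚ)) := by
    rw [← hd]; push_cast; ring
  rw [h1, h2, Finset.mul_sum, Finset.mul_sum, ← Finset.sum_sub_distrib]
  exact Finset.sum_congr rfl fun i _ => by ring

lemma Eder_eigen {n : ℕ} (k w : ℕ) :
    ∀ p ∈ Qspace n k w, Eder n p = (2*(w:ℚ) - (n:ℚ)*(k:ℚ)) • p := by
  intro p hp
  induction hp using Submodule.span_induction with
  | mem x hx =>
    obtain ⟨ν, hd, hw, rfl⟩ := hx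
    exact Eder_monomial k w ν hd hw
  | zero => simp
  | add x y hx hy ihx ihy => rw [map_add, ihx, ihy, smul_add]
  | smul a x hx ih => rw [Derivation.map_smul, ih, smul_comm]

lemma sum_single_shift {n : ℕ} (f : Fin (n+1) → ℕ) (ν : Fin (n+1) →₀ ℕ) (c : Fin (n+1)) :
    (∑ j : Fin (n+1), f j * ((ν + Finsupp.single c 1 : Fin (n+1) →₀ ℕ) j))
      = (∑ j : Fin (n+1), f j * ν j) + f c := by
  simp only [Finsupp.add_apply, Finsupp.single_apply, mul_add, Finset.sum_add_distrib]
  congr 1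
  simp [mul_ite, Finset.sum_ite_eq]

lemma shift_mem {n : ℕ} (k w w' : ℕ) (ν : Fin (n+1) →₀ ℕ)
    (hd : (∑ i : Fin (n+1), ν i) = k) (hw : (∑ i : Fin (n+1), (i : ℕ) * ν i) = w)
    (a b : Fin (n+1)) (ha : 1 ≤ ν a) (hab : w + (b:ℕ) = w' + (a:ℕ)) :
    monomial (ν - Finsupp.single a 1 + Finsupp.single b 1) (1:ℚ) ∈ Qspace n k w' := by
  apply Submodule.subset_span
  set ρ := ν - Finsupp.single a 1 with hρ
  have hν : ρ + Finsupp.single a 1 = ν :=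
    tsub_add_cancel_of_le (Finsupp.single_le_iff.mpr ha)
  have key : ∀ f : Fin (n+1) → ℕ,
      (∑ j : Fin (n+1), f j * ((ρ + Finsupp.single b 1 : Fin (n+1) →₀ ℕ) j)) + f a
        = (∑ j : Fin (n+1), f j * ν j) + f b := by
    intro f
    rw [sum_single_shift, ← hν, sum_single_shift]
    ring
  refine ⟨ρ + Finsupp.single b 1, ?_, ?_, rfl⟩
  · have := key (fun _ => 1)
    simp only [one_mul] at this
    omega
  · have := key (fun j => (j : ℕ))
    omega

lemma span_map {n : ℕ} {L : RR n →ₗ[ℚ] RR n} {S : Set (RR n)} {N : Submodule ℚ (RR n)}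
    (h : ∀ p ∈ S, L p ∈ N) : ∀ p ∈ Submodule.span ℚ S, L p ∈ N := by
  intro p hp
  have hle : Submodule.span ℚ S ≤ N.comap L := Submodule.span_le.mpr fun q hq => h q hq
  exact hle hp

lemma Δ_monomial_mem {n : ℕ} (k w : ℕ) (ν : Fin (n+1) →₀ ℕ)
    (hd : (∑ i : Fin (n+1), ν i) = k) (hw : (∑ i : Fin (n+1), (i : ℕ) * ν i) = w) :
    Δop n (monomial ν (1:ℚ)) ∈ Qspace n k (w+1) := by
  rw [Δop, LinearMap.sum_apply]
  refine Submodule.sum_mem _ fun i _ => ?_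
  rw [LinearMap.smul_apply, LinearMap.comp_apply, LinearMap.mulLeft_apply,
    Derivation.coeFn_coe, pderiv_monomial]
  refine Submodule.smul_mem _ _ ?_
  by_cases hz : ν i.castSucc = 0
  · simp [hz]
  · rw [← pow_one (X i.succ), ← monomial_single_add, one_mul]
    rw [show Finsupp.single i.succ 1 + (ν - Finsupp.single i.castSucc 1)
        = ν - Finsupp.single i.castSucc 1 + Finsupp.single i.succ 1 from add_comm _ _]
    rw [show (monomial (ν - Finsupp.single i.castSucc 1 + Finsupp.single i.succ 1) ((ν i.castSucc : ℚ)))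
        = (ν i.castSucc : ℚ) • monomial (ν - Finsupp.single i.castSucc 1 + Finsupp.single i.succ 1) (1:ℚ) from by
      rw [smul_monomial, smul_eq_mul, mul_one]]
    refine Submodule.smul_mem _ _ ?_
    refine shift_mem k w (w+1) ν hd hw i.castSucc i.succ (Nat.one_le_iff_ne_zero.mpr hz) ?_
    have e1 : ((i.succ : ℕ)) = (i : ℕ) + 1 := rfl
    have e2 : ((i.castSucc : ℕ)) = (i : ℕ) := rfl
    omega

lemma D_monomial_mem {n : ℕ} (k w : ℕ) (hw1 : 1 ≤ w) (ν : Fin (n+1) →₀ ℕ)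
    (hd : (∑ i : Fin (n+1), ν i) = k) (hw : (∑ i : Fin (n+1), (i : ℕ) * ν i) = w) :
    Dop n (monomial ν (1:ℚ)) ∈ Qspace n k (w-1) := by
  rw [Dop, LinearMap.sum_apply]
  refine Submodule.sum_mem _ fun i _ => ?_
  rw [LinearMap.smul_apply, LinearMap.comp_apply, LinearMap.mulLeft_apply,
    Derivation.coeFn_coe, pderiv_monomial]
  refine Submodule.smul_mem _ _ ?_
  by_cases hz : ν i.succ = 0
  · simp [hz]
  · rw [← pow_one (X i.castSucc), ← monomial_single_add, one_mul]
    rw [show Finsupp.single i.castSucc 1 + (ν - Finsupp.single i.succ 1)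
        = ν - Finsupp.single i.succ 1 + Finsupp.single i.castSucc 1 from add_comm _ _]
    rw [show (monomial (ν - Finsupp.single i.succ 1 + Finsupp.single i.castSucc 1) ((ν i.succ : ℚ)))
        = (ν i.succ : ℚ) • monomial (ν - Finsupp.single i.succ 1 + Finsupp.single i.castSucc 1) (1:ℚ) from by
      rw [smul_monomial, smul_eq_mul, mul_one]]
    refine Submodule.smul_mem _ _ ?_
    refine shift_mem k w (w-1) ν hd hw i.succ i.castSucc (Nat.one_le_iff_ne_zero.mpr hz) ?_
    have e1 : ((i.succ : ℕ)) = (i : ℕ) + 1 := rfl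
    have e2 : ((i.castSucc : ℕ)) = (i : ℕ) := rfl
    omega

lemma D_monomial_zero {n : ℕ} (ν : Fin (n+1) →₀ ℕ)
    (hw : (∑ i : Fin (n+1), (i : ℕ) * ν i) = 0) :
    Dop n (monomial ν (1:ℚ)) = 0 := by
  have hν : ∀ i : Fin n, ν i.succ = 0 := by
    intro i
    have h0 := (Finset.sum_eq_zero_iff.mp hw) i.succ (Finset.mem_univ _)
    rcases Nat.mul_eq_zero.mp h0 with hc | hc
    · exact absurd hc (by simp [Fin.val_succ])
    · exact hc
  rw [Dop, LinearMap.sum_apply]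
  refine Finset.sum_eq_zero fun i _ => ?_
  rw [LinearMap.smul_apply, LinearMap.comp_apply, LinearMap.mulLeft_apply,
    Derivation.coeFn_coe, pderiv_monomial, hν i]
  simp

lemma Δ_mem {n : ℕ} (k w : ℕ) : ∀ p ∈ Qspace n k w, Δop n p ∈ Qspace n k (w+1) := by
  refine span_map fun q hq => ?_
  obtain ⟨ν, hd, hw, rfl⟩ := hq
  exact Δ_monomial_mem k w ν hd hw

lemma D_mem {n : ℕ} (k w : ℕ) (hw1 : 1 ≤ w) :
    ∀ p ∈ Qspace n k w, Dop n p ∈ Qspace n k (w-1) := by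
  refine span_map fun q hq => ?_
  obtain ⟨ν, hd, hw, rfl⟩ := hq
  exact D_monomial_mem k w hw1 ν hd hw

lemma D_zero {n : ℕ} (k : ℕ) : ∀ p ∈ Qspace n k 0, Dop n p = 0 := by
  have : ∀ p ∈ Qspace n k 0, Dop n p ∈ (⊥ : Submodule ℚ (RR n)) := by
    refine span_map fun q hq => ?_
    obtain ⟨ν, hd, hw, rfl⟩ := hq
    simp [D_monomial_zero ν hw]
  intro p hp
  simpa using this p hp


/-- `Δ` maps `Q_n(k,m-1)` into `Q_n(k,m)` injectively. -/
theorem Delta_injective_on_Q (n k m : ℕ) (hm : 1 ≤ m) (h : 2 * m ≤ n * k) :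
    (∀ I ∈ Qspace n k (m - 1), Δop n I ∈ Qspace n k m) ∧
    (∀ I ∈ Qspace n k (m - 1), Δop n I = 0 → I = 0) := by
  constructor
  · intro I hI
    have := Δ_mem (k := k) (w := m - 1) I hI
    rwa [show m - 1 + 1 = m from by omega] at this
  · intro I hI hΔI
    have hq2m : (2:ℚ) * (m:ℚ) ≤ (n:ℚ) * (k:ℚ) := by exact_mod_cast h
    set μ : ℚ := 2 * ((m:ℚ) - 1) - (n:ℚ) * (k:ℚ) with hμdef
    have hμ : μ ≤ -2 := by rw [hμdef]; linarith
    -- membership of iterates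
    have mem : ∀ j, j ≤ m - 1 → (Dop n ^ j) I ∈ Qspace n k (m - 1 - j) := by
      intro j
      induction j with
      | zero => intro _; simpa using hI
      | succ j ih =>
        intro hj
        have h1 := ih (by omega)
        have h2 : 1 ≤ m - 1 - j := by omega
        have h3 := D_mem (k := k) (w := m - 1 - j) h2 _ h1
        rw [pow_succ', Module.End.mul_apply]
        rwa [show m - 1 - (j+1) = m - 1 - j - 1 from by omega]
    -- eigenvalue of Eder on iterates
    have eig : ∀ j, j ≤ m - 1 → Eder n ((Dop n ^ j) I) = (μ - 2 * (j:ℚ)) • (Dop n ^ j) I := by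
      intro j hj
      have := Eder_eigen (k := k) (w := m - 1 - j) _ (mem j hj)
      rw [this]
      congr 1
      rw [Nat.cast_sub hj, Nat.cast_sub hm]
      push_cast
      ring
    -- the sl2 string identity
    have string : ∀ j, j ≤ m - 1 →
        Δop n ((Dop n ^ (j+1)) I) = (((j:ℚ) + 1) * (μ - (j:ℚ))) • ((Dop n ^ j) I) := by
      intro j
      induction j with
      | zero =>
        intro h0
        rw [pow_one]
        have hc := comm_apply (n := n) I
        rw [hΔI, map_zero] at hc
        have he := eig 0 (by omega)
        simp only [pow_zero, Module.End.one_apply] at he ⊢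
        rw [sub_zero, he] at hc
        rw [hc]
        congr 1
        push_cast
        ring
      | succ j ih =>
        intro hj
        have hj' : j ≤ m - 1 := by omega
        have hΔx := ih hj'
        have hE := eig (j+1) hj
        have hc := comm_apply (n := n) ((Dop n ^ (j+1)) I)
        rw [hΔx, map_smul, hE] at hc
        have e1 : (Dop n) ((Dop n ^ j) I) = (Dop n ^ (j+1)) I := by
          rw [pow_succ', Module.End.mul_apply]
        rw [e1] at hc
        rw [pow_succ' (Dop n) (j+1), Module.End.mul_apply]
        have hkey : Δop n (Dop n ((Dop n ^ (j+1)) I))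
            = (μ - 2*((j:ℚ)+1)) • (Dop n ^ (j+1)) I
              + (((j:ℚ) + 1) * (μ - (j:ℚ))) • (Dop n ^ (j+1)) I := by
          have h4 := sub_eq_iff_eq_add.mp hc
          rw [h4]
          congr 2
          push_cast
          ring
        rw [hkey, ← add_smul]
        congr 1
        push_cast
        ring
    -- D^m I = 0
    have dm : (Dop n ^ m) I = 0 := by
      rw [show m = (m - 1) + 1 from by omega, pow_succ', Module.End.mul_apply]
      refine D_zero k _ ?_
      have := mem (m - 1) le_rfl
      rwa [Nat.sub_self] at this
    -- descend
    have descend : ∀ j, j ≤ m → (Dop n ^ (m - j)) I = 0 := by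
      intro j
      induction j with
      | zero => intro _; simpa using dm
      | succ j ih =>
        intro hj
        have h0 := ih (by omega)
        have htm : m - (j+1) ≤ m - 1 := by omega
        have ht1 : m - (j+1) + 1 = m - j := by omega
        have hs := string (m - (j+1)) htm
        rw [ht1, h0, map_zero] at hs
        have hc : (((m - (j+1) : ℕ):ℚ) + 1) * (μ - ((m - (j+1) : ℕ):ℚ)) ≠ 0 := by
          have hp1 : (0:ℚ) < ((m - (j+1) : ℕ):ℚ) + 1 := by positivity
          have hp2 : μ - ((m - (j+1) : ℕ):ℚ) < 0 := by
            have : (0:ℚ) ≤ ((m - (j+1) : ℕ):ℚ) := Nat.cast_nonneg _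
            linarith
          exact mul_ne_zero (ne_of_gt hp1) (ne_of_lt hp2)
        have hx : ((((m - (j+1) : ℕ):ℚ) + 1) * (μ - ((m - (j+1) : ℕ):ℚ))) • (Dop n ^ (m - (j+1))) I = 0 := hs.symm
        have h2 := congrArg (fun y => ((((m - (j+1) : ℕ):ℚ) + 1) * (μ - ((m - (j+1) : ℕ):ℚ)))⁻¹ • y) hx
        simp only [smul_smul, smul_zero, inv_mul_cancel₀ hc, one_smul] at h2
        exact h2
    have := descend m le_rfl
    simpa using this
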